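/- The function dual : ℕ → ℕ is an involution: for every natural number n, dual(dual(n)) = n. -/

import Mathlib

/-- The pairing function `c`. -/
def c (i j : ℕ) : ℕ := if Odd j then 2 ^ (i + 1) * j else 2 ^ (i + 1) * (j + 1) - 1

/-- The inverse of `c` on positive naturals (returns `(0,0)` at `0`). -/
def c' (n : ℕ) : ℕ × ℕ :=
  (padicValNat 2 (n + n % 2) - 1, (n + n % 2) / 2 ^ padicValNat 2 (n + n % 2) - n % 2)

lemma c'_fst_lt {n : ℕ} (hn : 0 < n) : (c' n).1 < n := by
  have hm : 0 < n + n % 2 := by omega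
  have hdvd : (2 : ℕ) ^ padicValNat 2 (n + n % 2) ∣ (n + n % 2) := pow_padicValNat_dvd
  have hle : (2 : ℕ) ^ padicValNat 2 (n + n % 2) ≤ n + n % 2 := Nat.le_of_dvd hm hdvd
  have hlt : padicValNat 2 (n + n % 2) < 2 ^ padicValNat 2 (n + n % 2) := by
    first
    | exact Nat.lt_two_pow_self
    | exact Nat.lt_two_pow_self _
    | exact Nat.lt_pow_self (by norm_num)
  simp only [c']
  generalize hv : padicValNat 2 (n + n % 2) = v at *
  generalize hp : (2 : ℕ) ^ v = p at *
  omega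

lemma c'_snd_lt {n : ℕ} (hn : 0 < n) : (c' n).2 < n := by
  have hm : 0 < n + n % 2 := by omega
  have h2 : (2 : ℕ) ∣ (n + n % 2) := by omega
  have hv : 1 ≤ padicValNat 2 (n + n % 2) := one_le_padicValNat_of_dvd hm.ne' h2
  have h2le : (2 : ℕ) ≤ 2 ^ padicValNat 2 (n + n % 2) := by
    calc (2:ℕ) = 2 ^ 1 := (pow_one 2).symm
    _ ≤ 2 ^ padicValNat 2 (n + n % 2) := Nat.pow_le_pow_right (by norm_num) hv
  have hle : (n + n % 2) / 2 ^ padicValNat 2 (n + n % 2) ≤ (n + n % 2) / 2 :=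
    Nat.div_le_div_left h2le (by norm_num)
  simp only [c']
  generalize hq : (n + n % 2) / 2 ^ padicValNat 2 (n + n % 2) = q at *
  omega

lemma c'_fst_lt_of_lt {m n : ℕ} (h : m < n) : (c' m).1 < n := by
  rcases Nat.eq_zero_or_pos m with rfl | hm
  · simp [c']; omega
  · exact lt_trans (c'_fst_lt hm) h

lemma c'_snd_lt_of_lt {m n : ℕ} (h : m < n) : (c' m).2 < n := by
  rcases Nat.eq_zero_or_pos m with rfl | hm
  · simp [c']; omega
  · exact lt_trans (c'_snd_lt hm) h

def dual : ℕ → ℕ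
  | 0 => 0
  | n + 1 => c (dual (c' (n + 1)).2) (dual (c' (n + 1)).1)
  decreasing_by
  · exact c'_snd_lt (Nat.succ_pos n)
  · exact c'_fst_lt (Nat.succ_pos n)

lemma padic_two_pow_mul_odd {k m : ℕ} (hm : Odd m) :
    padicValNat 2 (2 ^ k * m) = k := by
  have hm0 : m ≠ 0 := by rintro rfl; simp [Nat.odd_iff] at hm
  haveI : Fact (Nat.Prime 2) := ⟨Nat.prime_two⟩
  rw [padicValNat.mul (by positivity) hm0, padicValNat.prime_pow k,
    padicValNat.eq_zero_of_not_dvd (by rw [Nat.odd_iff] at hm; omega)]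
  omega

lemma c_pos (i j : ℕ) : 0 < c i j := by
  unfold c
  have h2 : 0 < 2 ^ (i + 1) := Nat.pow_pos (by norm_num)
  split
  · rename_i h
    have : j ≠ 0 := by rintro rfl; simp [Nat.odd_iff] at h
    positivity
  · have : 2 ≤ 2 ^ (i + 1) := by
      calc (2:ℕ) = 2^1 := rfl
      _ ≤ 2 ^ (i+1) := Nat.pow_le_pow_right (by norm_num) (by omega)
    have := Nat.le_mul_of_pos_right (2 ^ (i+1)) (show 0 < j + 1 by omega)
    omega

lemma c'_c (i j : ℕ) : c' (c i j) = (i, j) := by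
  unfold c c'
  by_cases hj : Odd j
  · simp only [if_pos hj]
    have hmod : (2 ^ (i + 1) * j) % 2 = 0 := by
      have : (2:ℕ) ∣ 2 ^ (i+1) * j := Dvd.dvd.mul_right (dvd_pow_self 2 (by omega)) j
      omega
    rw [hmod]
    have hadd : 2 ^ (i + 1) * j + 0 = 2 ^ (i + 1) * j := by ring
    rw [hadd, padic_two_pow_mul_odd hj]
    rw [Nat.mul_div_cancel_left _ (Nat.pow_pos (by norm_num))]
    simp
  · simp only [if_neg hj]
    rw [Nat.not_odd_iff] at hj
    have h2 : 2 ≤ 2 ^ (i + 1) * (j + 1) := by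
      have : 2 ≤ 2 ^ (i + 1) := by
        calc (2:ℕ) = 2^1 := rfl
        _ ≤ 2 ^ (i+1) := Nat.pow_le_pow_right (by norm_num) (by omega)
      have := Nat.le_mul_of_pos_right (2 ^ (i+1)) (show 0 < j + 1 by omega)
      omega
    have hmod : (2 ^ (i + 1) * (j + 1) - 1) % 2 = 1 := by
      have : (2:ℕ) ∣ 2 ^ (i+1) * (j+1) := Dvd.dvd.mul_right (dvd_pow_self 2 (by omega)) _
      omega
    rw [hmod]
    have hadd : 2 ^ (i + 1) * (j + 1) - 1 + 1 = 2 ^ (i + 1) * (j + 1) := by omega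
    rw [hadd, padic_two_pow_mul_odd (by simp [Nat.odd_iff]; omega)]
    rw [Nat.mul_div_cancel_left _ (Nat.pow_pos (by norm_num))]
    simp

lemma dual_c (a b : ℕ) : dual (c a b) = c (dual b) (dual a) := by
  have h := c_pos a b
  obtain ⟨m, hm⟩ : ∃ m, c a b = m + 1 := ⟨c a b - 1, by omega⟩
  rw [hm]
  rw [show dual (m+1) = c (dual (c' (m + 1)).2) (dual (c' (m + 1)).1) from by
    rw [dual]]
  rw [← hm, c'_c]

lemma c_c' {n : ℕ} (hn : 0 < n) : c (c' n).1 (c' n).2 = n := by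
  unfold c c'
  rcases Nat.even_or_odd n with he | ho
  · have hmod : n % 2 = 0 := by rw [Nat.even_iff] at he; omega
    rw [hmod]
    simp only [Nat.add_zero, Nat.sub_zero]
    set v := padicValNat 2 n with hv
    have hdvd : (2:ℕ)^v ∣ n := pow_padicValNat_dvd
    obtain ⟨m, hm⟩ := hdvd
    have hv1 : 1 ≤ v := one_le_padicValNat_of_dvd hn.ne' (by omega)
    have hmodd : Odd m := by
      rcases Nat.even_or_odd m with hme | hmo
      · exfalso
        obtain ⟨k, hk⟩ := hme
        have : n = 2 ^ (v+1) * k := by rw [hm, hk]; ring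
        have heq := this
        haveI : Fact (Nat.Prime 2) := ⟨Nat.prime_two⟩
        have h2 : (2:ℕ)^(v+1) ∣ n := ⟨k, heq⟩
        rw [padicValNat_dvd_iff_le (by omega)] at h2
        omega
      · exact hmo
    have hpv : (2:ℕ)^v > 0 := Nat.pow_pos (by norm_num)
    rw [hm, Nat.mul_div_cancel_left _ hpv]
    rw [if_pos hmodd]
    rw [show v - 1 + 1 = v by omega]
  · have hmod : n % 2 = 1 := by rw [Nat.odd_iff] at ho; omega
    rw [hmod]
    set v := padicValNat 2 (n+1) with hv
    have hn1 : 0 < n + 1 := by omega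
    have hdvd : (2:ℕ)^v ∣ n + 1 := pow_padicValNat_dvd
    obtain ⟨m, hm⟩ := hdvd
    have hv1 : 1 ≤ v := one_le_padicValNat_of_dvd hn1.ne' (by omega)
    have hmodd : Odd m := by
      rcases Nat.even_or_odd m with hme | hmo
      · exfalso
        obtain ⟨k, hk⟩ := hme
        have : n + 1 = 2 ^ (v+1) * k := by rw [hm, hk]; ring
        have heq := this
        haveI : Fact (Nat.Prime 2) := ⟨Nat.prime_two⟩
        have h2 : (2:ℕ)^(v+1) ∣ n + 1 := ⟨k, heq⟩
        rw [padicValNat_dvd_iff_le (by omega)] at h2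
        omega
      · exact hmo
    have hpv : (2:ℕ)^v > 0 := Nat.pow_pos (by norm_num)
    have hm1 : 1 ≤ m := by
      by_contra h; push_neg at h
      interval_cases m <;> omega
    rw [hm, Nat.mul_div_cancel_left _ hpv]
    have hnotodd : ¬ Odd (m - 1) := by
      rw [Nat.odd_iff] at hmodd ⊢; omega
    rw [if_neg hnotodd]
    rw [show v - 1 + 1 = v by omega, show m - 1 + 1 = m by omega]
    omega

theorem dual_involutive (n : ℕ) : dual (dual n) = n := by
  induction n using Nat.strong_induction_on with
  | _ n ih =>
    rcases Nat.eq_zero_or_pos n with rfl | hn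
    · rw [show dual 0 = 0 from by rw [dual], show dual 0 = 0 from by rw [dual]]
    obtain ⟨m, hm⟩ : ∃ m, n = m + 1 := ⟨n - 1, by omega⟩
    subst hm
    rw [show dual (m+1) = c (dual (c' (m + 1)).2) (dual (c' (m + 1)).1) from by
      rw [dual]]
    rw [dual_c, ih _ (c'_fst_lt hn), ih _ (c'_snd_lt hn), c_c' hn]
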